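/- arXiv:1008.5026 — 3 statements merged into one kernel-verified Lean document; each statement's English description precedes it below -/
import Mathlib

section
/- Let n ≥ 1 and let L be an n×n matrix over ℚ. In the Laurent polynomial ring R = ℚ[u, u⁻¹] equipped with the derivation D extending d/du, set z = u − u⁻¹ and A = z·L + u⁻¹·I_n (an n×n matrix over R), and let Δ = det A. Then u·z·D(Δ) = n·(u + u⁻¹)·Δ − 2·tr(adjugate A) in R. -/
open LaurentPolynomial

/-- The derivation of `ℚ[u,u⁻¹]` extending `d/du`: it sends `∑ aₙ uⁿ` to `∑ n aₙ u^{n-1}`. -/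
noncomputable def laurentDeriv (f : LaurentPolynomial ℚ) : LaurentPolynomial ℚ :=
  f.coeff.sum (fun n a => C ((n : ℚ) * a) * T (n - 1))

abbrev R := LaurentPolynomial ℚ

lemma laurentDeriv_zero : laurentDeriv 0 = 0 := by
  unfold laurentDeriv; rw [AddMonoidAlgebra.coeff_zero]; exact Finsupp.sum_zero_index

lemma laurentDeriv_add (f g : R) : laurentDeriv (f + g) = laurentDeriv f + laurentDeriv g := by
  unfold laurentDeriv
  rw [AddMonoidAlgebra.coeff_add]
  apply Finsupp.sum_add_index' <;> intros <;> simp [mul_add, add_mul]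

lemma laurentDeriv_C_mul_T (m : ℤ) (a : ℚ) :
    laurentDeriv (C a * T m) = C ((m : ℚ) * a) * T (m - 1) := by
  rw [← single_eq_C_mul_T]
  unfold laurentDeriv
  rw [AddMonoidAlgebra.coeff_single, Finsupp.sum_single_index] <;> simp

lemma laurentDeriv_mul (f g : R) :
    laurentDeriv (f * g) = f * laurentDeriv g + g * laurentDeriv f := by
  have h1 : ∀ (x y : ℤ) (c d : ℚ), (C c * T x) * (C d * T y) = C (c * d) * T (x + y) := by
    intro x y c d; rw [T_add, map_mul]; ring
  induction f using LaurentPolynomial.induction_on' with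
  | add p q hp hq => rw [add_mul, laurentDeriv_add, hp, hq, laurentDeriv_add]; ring
  | C_mul_T m a =>
    induction g using LaurentPolynomial.induction_on' with
    | add p q hp hq => rw [mul_add, laurentDeriv_add, hp, hq, laurentDeriv_add]; ring
    | C_mul_T k b =>
      rw [h1, laurentDeriv_C_mul_T, laurentDeriv_C_mul_T, laurentDeriv_C_mul_T, h1, h1,
        show m + (k - 1) = m + k - 1 from by ring, show k + (m - 1) = m + k - 1 from by ring,
        ← add_mul, ← map_add]
      congr 2
      push_cast
      ring

lemma laurentDeriv_sum {ι : Type*} (s : Finset ι) (f : ι → R) :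
    laurentDeriv (∑ i ∈ s, f i) = ∑ i ∈ s, laurentDeriv (f i) := by
  induction s using Finset.cons_induction with
  | empty => simp [laurentDeriv_zero]
  | cons a s ha ih => simp [laurentDeriv_add, ih]

lemma laurentDeriv_C (a : ℚ) : laurentDeriv (C a) = 0 := by
  simpa using laurentDeriv_C_mul_T 0 a

lemma laurentDeriv_one : laurentDeriv (1 : R) = 0 := by
  simpa using laurentDeriv_C 1

lemma laurentDeriv_T (m : ℤ) : laurentDeriv (T m : R) = C (m : ℚ) * T (m - 1) := by
  simpa using laurentDeriv_C_mul_T m 1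

lemma laurentDeriv_int_mul (k : ℤ) (f : R) :
    laurentDeriv ((k : R) * f) = (k : R) * laurentDeriv f := by
  rw [show ((k : ℤ) : R) = C ((k : ℤ) : ℚ) from (map_intCast (C : ℚ →+* LaurentPolynomial ℚ) k).symm]
  rw [laurentDeriv_mul, laurentDeriv_C, mul_zero, add_zero]

lemma laurentDeriv_prod {ι : Type*} [DecidableEq ι] (s : Finset ι) (f : ι → R) :
    laurentDeriv (∏ i ∈ s, f i) =
      ∑ i ∈ s, (∏ j ∈ s.erase i, f j) * laurentDeriv (f i) := by
  induction s using Finset.induction with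
  | empty => simp [laurentDeriv_one]
  | insert _ _ h ih =>
    rename_i a s
    rw [Finset.prod_insert h, laurentDeriv_mul, Finset.sum_insert h, Finset.erase_insert h, ih,
      Finset.mul_sum, add_comm]
    congr 1
    apply Finset.sum_congr rfl
    intro i hi
    rw [Finset.erase_insert_of_ne (ne_of_mem_of_not_mem hi h).symm,
      Finset.prod_insert (fun hc => h (Finset.mem_of_mem_erase hc)), mul_assoc]

lemma jacobi {n : ℕ} (A : Matrix (Fin n) (Fin n) R) :
    laurentDeriv A.det = Matrix.trace (A.adjugate * A.map laurentDeriv) := by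
  have step1 : laurentDeriv A.det =
      ∑ c, (A.updateCol c (fun i => laurentDeriv (A i c))).det := by
    rw [Matrix.det_apply', laurentDeriv_sum]
    have : ∀ σ : Equiv.Perm (Fin n),
        laurentDeriv (((Equiv.Perm.sign σ : ℤ) : R) * ∏ i, A (σ i) i) =
        ∑ c, ((Equiv.Perm.sign σ : ℤ) : R) *
          ((∏ i ∈ Finset.univ.erase c, A (σ i) i) * laurentDeriv (A (σ c) c)) := by
      intro σ
      rw [laurentDeriv_int_mul, laurentDeriv_prod, Finset.mul_sum]
    rw [Finset.sum_congr rfl (fun σ _ => this σ), Finset.sum_comm]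
    apply Finset.sum_congr rfl
    intro c _
    rw [Matrix.det_apply']
    apply Finset.sum_congr rfl
    intro σ _
    rw [← Finset.mul_prod_erase Finset.univ _ (Finset.mem_univ c), Matrix.updateCol_self]
    rw [Finset.prod_congr rfl
      (fun i hi => Matrix.updateCol_ne (Finset.ne_of_mem_erase hi) (c := fun i => laurentDeriv (A i c)))]
    ring
  rw [step1]
  have step2 : ∀ c, (A.updateCol c (fun i => laurentDeriv (A i c))).det =
      ∑ i, A.adjugate c i * laurentDeriv (A i c) := by
    intro c
    rw [← Matrix.cramer_apply, Matrix.cramer_eq_adjugate_mulVec]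
    rfl
  simp only [step2, Matrix.trace, Matrix.diag, Matrix.mul_apply, Matrix.map_apply]


/-- The matrix `A = z·L + u⁻¹·I` over `ℚ[u,u⁻¹]`, where `z = u − u⁻¹`. -/
noncomputable def alexMat (n : ℕ) (L : Matrix (Fin n) (Fin n) ℚ) :
    Matrix (Fin n) (Fin n) (LaurentPolynomial ℚ) :=
  ((T 1 - T (-1) : LaurentPolynomial ℚ)) • L.map (fun a => C a) + (T (-1) : LaurentPolynomial ℚ) • (1 : Matrix (Fin n) (Fin n) (LaurentPolynomial ℚ))

lemma key_matrix (n : ℕ) (L : Matrix (Fin n) (Fin n) ℚ) :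
    (T 1 * (T 1 - T (-1)) : R) • (alexMat n L).map laurentDeriv =
      ((T 1 + T (-1)) : R) • alexMat n L - (2 : R) • (1 : Matrix (Fin n) (Fin n) R) := by
  have hu : (T 1 : R) * T (-1) = 1 := by rw [← T_add]; norm_num [T_zero]
  have hm2 : (T (-2) : R) = T (-1) * T (-1) := by rw [← T_add]; norm_num
  apply Matrix.ext
  intro i j
  simp only [alexMat, Matrix.map_apply, Matrix.add_apply, Matrix.smul_apply, Matrix.sub_apply,
    Matrix.one_apply, smul_eq_mul]
  rw [laurentDeriv_add, laurentDeriv_mul, laurentDeriv_C]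
  rw [show laurentDeriv (T 1 - T (-1) : R) = 1 + T (-2) by
    rw [sub_eq_add_neg, laurentDeriv_add, show (-T (-1) : R) = C (-1) * T (-1) by simp,
      laurentDeriv_C_mul_T, laurentDeriv_T]
    norm_num [T_zero]]
  by_cases h : i = j
  · simp only [if_pos h]
    rw [laurentDeriv_mul, laurentDeriv_one, laurentDeriv_T]
    simp only [Int.cast_neg, Int.cast_one, map_neg, map_one]
    norm_num
    rw [hm2]
    linear_combination (C (L i j) * T (-1) * (T 1 - T (-1)) + (- T 1 * T (-1) + T (-1) * T (-1) - 2)) * hu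
  · simp only [if_neg h]
    rw [laurentDeriv_mul, laurentDeriv_zero]
    norm_num
    rw [hm2]
    linear_combination (C (L i j) * T (-1) * (T 1 - T (-1))) * hu


/-- For `A = (u − u⁻¹)·L + u⁻¹·I` and `Δ = det A`, one has
`u·(u − u⁻¹)·Δ' = n·(u + u⁻¹)·Δ − 2·tr(adjugate A)` in `ℚ[u,u⁻¹]`. -/
theorem laurent_logderiv_det_identity (n : ℕ) (hn : 1 ≤ n)
    (L : Matrix (Fin n) (Fin n) ℚ) :
    T 1 * (T 1 - T (-1)) * laurentDeriv (Matrix.det (alexMat n L)) =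
      (n : LaurentPolynomial ℚ) * (T 1 + T (-1)) * Matrix.det (alexMat n L) -
        2 * Matrix.trace (Matrix.adjugate (alexMat n L)) := by
  set A := alexMat n L with hA
  calc T 1 * (T 1 - T (-1)) * laurentDeriv A.det
      = Matrix.trace ((T 1 * (T 1 - T (-1)) : R) • (A.adjugate * A.map laurentDeriv)) := by
        rw [jacobi, Matrix.trace_smul, smul_eq_mul]
    _ = Matrix.trace (A.adjugate * ((T 1 * (T 1 - T (-1)) : R) • A.map laurentDeriv)) := by
        rw [Matrix.mul_smul]
    _ = Matrix.trace (A.adjugate * (((T 1 + T (-1)) : R) • A - (2 : R) • 1)) := by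
        rw [key_matrix]
    _ = ((T 1 + T (-1)) : R) * Matrix.trace (A.adjugate * A)
          - (2 : R) * Matrix.trace A.adjugate := by
        rw [Matrix.mul_sub, Matrix.trace_sub, Matrix.mul_smul, Matrix.trace_smul,
          Matrix.mul_smul, Matrix.mul_one, Matrix.trace_smul, smul_eq_mul, smul_eq_mul]
    _ = (n : R) * (T 1 + T (-1)) * A.det - 2 * Matrix.trace A.adjugate := by
        rw [Matrix.adjugate_mul, Matrix.trace_smul, Matrix.trace_one]
        simp only [Fintype.card_fin, smul_eq_mul, nsmul_eq_mul]
        ring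
end

section
/- Let r ≥ 1 and let α_1, …, α_r ∈ ℚ with α_r ≠ 0. Define the symmetric Laurent polynomial Δ = 1 − 2∑_{i=1}^r α_i + ∑_{i=1}^r α_i (x^i + x^{-i}) in ℚ[x, x⁻¹], and for k ≥ 1 define p_k = −4·x·Δ'(x)·(x^k − x^{-k}) + 2·Δ(x)·( (k+1)(x^k + x^{-k}) + 2∑_{i=1}^{k-1}(x^i + x^{-i}) + 2 ), where Δ' is the formal derivative of Δ. Then the coefficient of x^{k+r} in p_k equals 2(k + 1 − 2r)·α_r, and the coefficient of x^m in p_k vanishes for all m > k + r. Consequently, p_k has degree exactly k + r whenever k ≠ 2r − 1. -/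
open LaurentPolynomial

/-- The symmetric Laurent polynomial `Δ = 1 − 2∑ αᵢ + ∑ αᵢ (xⁱ + x⁻ⁱ)`. -/
noncomputable def symDelta (r : ℕ) (α : ℕ → ℚ) : LaurentPolynomial ℚ :=
  C (1 - 2 * ∑ i ∈ Finset.Icc 1 r, α i) +
    ∑ i ∈ Finset.Icc 1 r, C (α i) * (T (i : ℤ) + T (-(i : ℤ)))

/-- The Laurent polynomial
`p_k = −4xΔ'(x)(x^k − x^{-k}) + 2Δ(x)((k+1)(x^k + x^{-k}) + 2∑_{i=1}^{k-1}(xⁱ + x⁻ⁱ) + 2)`. -/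
noncomputable def pPoly (Δ : LaurentPolynomial ℚ) (k : ℕ) : LaurentPolynomial ℚ :=
  -4 * (T 1 * laurentDeriv Δ) * (T (k : ℤ) - T (-(k : ℤ))) +
    2 * Δ *
      (C ((k : ℚ) + 1) * (T (k : ℤ) + T (-(k : ℤ))) +
        2 * ∑ i ∈ Finset.Icc 1 (k - 1), (T (i : ℤ) + T (-(i : ℤ))) + 2)

lemma coeff_C_mul (a : ℚ) (f : LaurentPolynomial ℚ) (m : ℤ) : (C a * f).coeff m = a * f.coeff m := by
  have := AddMonoidAlgebra.coeff_single_mul_apply (R := ℚ) (G := ℤ) f a 0 m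
  rw [single_eq_C_mul_T, T_zero, mul_one] at this
  simpa using this

lemma coeff_T_mul (n : ℤ) (f : LaurentPolynomial ℚ) (m : ℤ) : ((T n * f : LaurentPolynomial ℚ).coeff m) = f.coeff (m - n) := by
  have : (T n * f : LaurentPolynomial ℚ).coeff m = 1 * f.coeff (-n + m) :=
    AddMonoidAlgebra.coeff_single_mul_apply (R := ℚ) (G := ℤ) f 1 n m
  simpa [sub_eq_neg_add] using this

lemma coeff_mul_T (f : LaurentPolynomial ℚ) (n m : ℤ) : ((f * T n : LaurentPolynomial ℚ).coeff m) = f.coeff (m - n) := by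
  have : (f * T n : LaurentPolynomial ℚ).coeff m = f.coeff (m + -n) * 1 :=
    AddMonoidAlgebra.coeff_mul_single_apply (R := ℚ) (G := ℤ) f 1 n m
  simpa [sub_eq_add_neg] using this

lemma laurentDeriv_apply (f : LaurentPolynomial ℚ) (m : ℤ) :
    (laurentDeriv f).coeff m = ((m + 1 : ℤ) : ℚ) * f.coeff (m + 1) := by
  unfold laurentDeriv
  rw [Finsupp.sum]
  simp only [← single_eq_C_mul_T]
  simp only [AddMonoidAlgebra.coeff_sum, AddMonoidAlgebra.coeff_single]
  rw [Finset.sum_apply']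
  simp only [Finsupp.single_apply]
  rw [Finset.sum_eq_single (m + 1)]
  · simp
  · intro n hn hne
    rw [if_neg (by omega)]
  · intro h
    simp [Finsupp.notMem_support_iff.mp h]

lemma symDelta_apply_ge (r : ℕ) (hr : 1 ≤ r) (α : ℕ → ℚ) (m : ℤ) (hm : (r : ℤ) ≤ m) :
    (symDelta r α).coeff m = if m = (r : ℤ) then α r else 0 := by
  unfold symDelta
  rw [AddMonoidAlgebra.coeff_add, Finsupp.add_apply, AddMonoidAlgebra.coeff_sum, Finset.sum_apply']
  have h0 : (C (1 - 2 * ∑ i ∈ Finset.Icc 1 r, α i) : LaurentPolynomial ℚ).coeff m = 0 := by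
    rw [C_apply, if_neg (by omega)]
  rw [h0, zero_add]
  have hterm : ∀ i ∈ Finset.Icc 1 r,
      (C (α i) * (T (i : ℤ) + T (-(i : ℤ))) : LaurentPolynomial ℚ).coeff m
        = if (i : ℤ) = m then α i else 0 := by
    intro i hi
    simp only [Finset.mem_Icc] at hi
    rw [coeff_C_mul, AddMonoidAlgebra.coeff_add, Finsupp.add_apply, T_apply, T_apply,
      if_neg (show ¬-(i : ℤ) = m by omega)]
    split <;> simp
  rw [Finset.sum_congr rfl hterm]
  by_cases h : m = (r : ℤ)
  · rw [if_pos h]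
    rw [Finset.sum_eq_single r]
    · rw [if_pos h.symm]
    · intro i hi hne
      simp only [Finset.mem_Icc] at hi
      rw [if_neg (by omega)]
    · intro h'
      simp only [Finset.mem_Icc] at h'
      omega
  · rw [if_neg h]
    apply Finset.sum_eq_zero
    intro i hi
    simp only [Finset.mem_Icc] at hi
    rw [if_neg (by omega)]

lemma coeff_T_one_mul_deriv (Δ : LaurentPolynomial ℚ) (j : ℤ) :
    ((T 1 * laurentDeriv Δ : LaurentPolynomial ℚ)).coeff j = (j : ℚ) * Δ.coeff j := by
  rw [coeff_T_mul, laurentDeriv_apply]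
  norm_num

lemma coeff_mul_sumT (Δ : LaurentPolynomial ℚ) (n : ℕ) (j : ℤ) :
    ((Δ * ∑ i ∈ Finset.Icc 1 n, (T (i : ℤ) + T (-(i : ℤ)))) : LaurentPolynomial ℚ).coeff j
      = ∑ i ∈ Finset.Icc 1 n, (Δ.coeff (j - (i : ℤ)) + Δ.coeff (j + (i : ℤ))) := by
  rw [Finset.mul_sum, AddMonoidAlgebra.coeff_sum, Finset.sum_apply']
  refine Finset.sum_congr rfl fun i hi => ?_
  rw [mul_add, AddMonoidAlgebra.coeff_add, Finsupp.add_apply, coeff_mul_T, coeff_mul_T, sub_neg_eq_add]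

lemma coeff_add (f g : LaurentPolynomial ℚ) (m : ℤ) : (f + g).coeff m = f.coeff m + g.coeff m :=
  Finsupp.add_apply f.coeff g.coeff m

lemma coeff_sub (f g : LaurentPolynomial ℚ) (m : ℤ) : (f - g).coeff m = f.coeff m - g.coeff m :=
  Finsupp.sub_apply f.coeff g.coeff m

lemma pPoly_apply (Δ : LaurentPolynomial ℚ) (k : ℕ) (m : ℤ) :
    (pPoly Δ k).coeff m =
      -4 * (((m - k : ℤ) : ℚ) * Δ.coeff (m - (k : ℤ)) - ((m + k : ℤ) : ℚ) * Δ.coeff (m + (k : ℤ))) +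
      2 * (((k : ℚ) + 1) * (Δ.coeff (m - (k : ℤ)) + Δ.coeff (m + (k : ℤ))) +
        2 * ∑ i ∈ Finset.Icc 1 (k - 1), (Δ.coeff (m - (i : ℤ)) + Δ.coeff (m + (i : ℤ))) + 2 * Δ.coeff m) := by
  have hre : pPoly Δ k =
      C (-4) * (T 1 * laurentDeriv Δ * T (k : ℤ)) -
        C (-4) * (T 1 * laurentDeriv Δ * T (-(k : ℤ))) +
      (C 2 * (C ((k : ℚ) + 1) * (Δ * T (k : ℤ))) +
        C 2 * (C ((k : ℚ) + 1) * (Δ * T (-(k : ℤ)))) +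
        C 2 * (C 2 * (Δ * ∑ i ∈ Finset.Icc 1 (k - 1), (T (i : ℤ) + T (-(i : ℤ))))) +
        C 2 * (C 2 * Δ)) := by
    rw [pPoly, show (-4 : LaurentPolynomial ℚ) = C (-4) by rw [map_neg, map_ofNat],
      show (2 : LaurentPolynomial ℚ) = C 2 by rw [map_ofNat]]
    ring
  rw [hre]
  simp only [coeff_add, coeff_sub, coeff_C_mul, coeff_mul_T,
    coeff_mul_sumT, coeff_T_one_mul_deriv, sub_neg_eq_add]
  push_cast
  ring

/-- Leading coefficient computation for `p_k(Δ, Δ)`: the coefficient of `x^{k+r}` is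
`2(k+1−2r)·α_r`, all higher coefficients vanish, and hence `p_k` has degree exactly
`k + r` whenever `k ≠ 2r − 1`. -/
theorem pPoly_leading_coeff (r : ℕ) (hr : 1 ≤ r) (α : ℕ → ℚ) (hα : α r ≠ 0)
    (k : ℕ) (hk : 1 ≤ k) :
    (pPoly (symDelta r α) k).coeff ((k : ℤ) + r) = 2 * ((k : ℚ) + 1 - 2 * r) * α r ∧
    (∀ m : ℤ, (k : ℤ) + r < m → (pPoly (symDelta r α) k).coeff m = 0) ∧
    (k ≠ 2 * r - 1 → (pPoly (symDelta r α) k).degree = ((k : ℤ) + r : ℤ)) := by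
  have hD0 : ∀ j : ℤ, (r : ℤ) < j → (symDelta r α).coeff j = 0 := by
    intro j hj
    rw [symDelta_apply_ge r hr α j (le_of_lt hj), if_neg (by omega)]
  have hDr : (symDelta r α).coeff (r : ℤ) = α r := by
    rw [symDelta_apply_ge r hr α r le_rfl, if_pos rfl]
  have h1 : (pPoly (symDelta r α) k).coeff ((k : ℤ) + r) = 2 * ((k : ℚ) + 1 - 2 * r) * α r := by
    have e1 : ((k : ℤ) + r) - (k : ℤ) = (r : ℤ) := by ring
    have hsum : ∑ i ∈ Finset.Icc 1 (k - 1),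
        ((symDelta r α).coeff (((k : ℤ) + r) - (i : ℤ)) + (symDelta r α).coeff (((k : ℤ) + r) + (i : ℤ))) = 0 := by
      refine Finset.sum_eq_zero fun i hi => ?_
      simp only [Finset.mem_Icc] at hi
      rw [hD0 _ (by omega), hD0 _ (by omega), add_zero]
    rw [pPoly_apply, e1, hDr, hD0 ((k : ℤ) + r + k) (by omega), hD0 ((k : ℤ) + r) (by omega),
      hsum]
    push_cast
    ring
  have h2 : ∀ m : ℤ, (k : ℤ) + r < m → (pPoly (symDelta r α) k).coeff m = 0 := by
    intro m hm
    have hsum : ∑ i ∈ Finset.Icc 1 (k - 1),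
        ((symDelta r α).coeff (m - (i : ℤ)) + (symDelta r α).coeff (m + (i : ℤ))) = 0 := by
      refine Finset.sum_eq_zero fun i hi => ?_
      simp only [Finset.mem_Icc] at hi
      rw [hD0 _ (by omega), hD0 _ (by omega), add_zero]
    rw [pPoly_apply, hD0 (m - k) (by omega), hD0 (m + k) (by omega), hD0 m (by omega), hsum]
    ring
  refine ⟨h1, h2, fun hne => ?_⟩
  have hco : (pPoly (symDelta r α) k).coeff ((k : ℤ) + r) ≠ 0 := by
    rw [h1]
    have hne' : (k : ℚ) + 1 - 2 * r ≠ 0 := by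
      intro h
      have : (k : ℚ) + 1 = 2 * r := by linarith
      have : k + 1 = 2 * r := by exact_mod_cast this
      omega
    exact mul_ne_zero (mul_ne_zero two_ne_zero hne') hα
  have hmem : ((k : ℤ) + r) ∈ (pPoly (symDelta r α) k).coeff.support :=
    Finsupp.mem_support_iff.mpr hco
  show (pPoly (symDelta r α) k).coeff.support.max = _
  apply le_antisymm
  · refine Finset.max_le fun m hm => ?_
    by_contra hlt
    push_neg at hlt
    have : ((k : ℤ) + r) < m := by exact_mod_cast hlt
    exact (Finsupp.mem_support_iff.mp hm) (h2 m this)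
  · exact Finset.le_max hmem
end

section
/- Let Δ ∈ ℚ[x, x⁻¹] be a Laurent polynomial such that Δ and x·Δ'(x) generate the unit ideal of ℚ[x, x⁻¹] (i.e. there exist a, b ∈ ℚ[x,x⁻¹] with a·Δ + b·xΔ' = 1), where Δ' is the formal derivative. For k ≥ 1 set p_k = −4·xΔ'(x)·(x^k − x^{-k}) + 2·Δ(x)·( (k+1)(x^k + x^{-k}) + 2∑_{i=1}^{k-1}(x^i + x^{-i}) + 2 ). If there exist s ≥ 1 and β_1, …, β_s ∈ ℚ with Δ(x)² = ∑_{i=1}^s β_i p_i, then Δ divides ∑_{i=1}^s β_i (x^i − x^{-i}) in ℚ[x, x⁻¹]. -/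
open LaurentPolynomial

/-- If `Δ` and `xΔ'` generate the unit ideal of `ℚ[x,x⁻¹]` and `Δ² = ∑ βᵢ pᵢ`, then
`Δ` divides `∑ βᵢ (xⁱ − x⁻ⁱ)`. -/
theorem delta_dvd_of_sq_eq_combination (Δ : LaurentPolynomial ℚ)
    (hcop : ∃ a b : LaurentPolynomial ℚ, a * Δ + b * (T 1 * laurentDeriv Δ) = 1)
    (s : ℕ) (hs : 1 ≤ s) (β : ℕ → ℚ)
    (heq : Δ ^ 2 = ∑ i ∈ Finset.Icc 1 s, C (β i) * pPoly Δ i) :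
    Δ ∣ ∑ i ∈ Finset.Icc 1 s, C (β i) * (T (i : ℤ) - T (-(i : ℤ))) := by
  obtain ⟨a, b, hab⟩ := hcop
  set D := T 1 * laurentDeriv Δ with hD
  set S := ∑ i ∈ Finset.Icc 1 s, C (β i) * (T (i : ℤ) - T (-(i : ℤ))) with hS
  set g : ℕ → LaurentPolynomial ℚ := fun k =>
      C ((k : ℚ) + 1) * (T (k : ℤ) + T (-(k : ℤ))) +
        2 * ∑ i ∈ Finset.Icc 1 (k - 1), (T (i : ℤ) + T (-(i : ℤ))) + 2 with hg
  have h1 : ∑ i ∈ Finset.Icc 1 s, C (β i) * pPoly Δ i =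
      (-4) * D * S + Δ * ∑ i ∈ Finset.Icc 1 s, C (β i) * (2 * g i) := by
    simp only [pPoly, hD, hg, hS, Finset.mul_sum, ← Finset.sum_add_distrib]
    exact Finset.sum_congr rfl fun i _ => by ring
  have key : Δ ∣ (-4) * D * S := by
    have h2 : (-4) * D * S = Δ * Δ - Δ * ∑ i ∈ Finset.Icc 1 s, C (β i) * (2 * g i) := by
      have := heq
      rw [h1, pow_two] at this
      rw [this]; ring
    rw [h2]
    exact dvd_sub (Dvd.intro _ rfl) (Dvd.intro _ rfl)
  have key2 : Δ ∣ D * S := by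
    have hC : (C (-1/4 : ℚ)) * (-4 : LaurentPolynomial ℚ) = 1 := by
      have h4 : (-4 : LaurentPolynomial ℚ) = C (-4 : ℚ) := by
        simp [map_neg, map_ofNat]
      rw [h4, ← map_mul]
      norm_num
    have h3 : D * S = C (-1/4 : ℚ) * ((-4) * D * S) := by
      calc D * S = (C (-1/4 : ℚ) * (-4)) * (D * S) := by rw [hC, one_mul]
        _ = C (-1/4 : ℚ) * ((-4) * D * S) := by ring
    rw [h3]
    exact key.mul_left _
  have hfin : Δ ∣ a * Δ * S + b * (D * S) :=
    dvd_add ⟨a * S, by ring⟩ (key2.mul_left b)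
  have hrw : a * Δ * S + b * (D * S) = S := by
    calc a * Δ * S + b * (D * S) = (a * Δ + b * D) * S := by ring
      _ = S := by rw [hab, one_mul]
  exact hrw ▸ hfin
end
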